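/- Let U ⊆ B(K₁,K₂) be a weak* closed subspace and let A ⊆ B(K₁), B ⊆ B(K₂) be von Neumann algebras such that B·U·A ⊆ U. Then for every T ∈ B(K₁,K₂), r_U(T) = sup { ‖QTP‖ : Q a projection in B′, P a projection in A′, Q U P = 0 }. -/

import Mathlib

open scoped InnerProductSpace
open ContinuousLinearMap

/-- `r_U(T)`: the supremum of `|⟨Tξ,η⟩|` over unit vectors `ξ, η` annihilating `U`. -/
noncomputable def rU {H K : Type*} [NormedAddCommGroup H] [InnerProductSpace ℂ H]
    [NormedAddCommGroup K] [InnerProductSpace ℂ K]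
    (U : Set (H →L[ℂ] K)) (T : H →L[ℂ] K) : ℝ :=
  sSup {c : ℝ | ∃ ξ : H, ∃ η : K, ‖ξ‖ = 1 ∧ ‖η‖ = 1 ∧
    (∀ X ∈ U, ⟪X ξ, η⟫_ℂ = 0) ∧ c = ‖(⟪T ξ, η⟫_ℂ)‖}

/-- An orthogonal projection: a self-adjoint idempotent. -/
def IsProjection {K : Type*} [NormedAddCommGroup K] [InnerProductSpace ℂ K] [CompleteSpace K]
    (P : K →L[ℂ] K) : Prop :=
  IsSelfAdjoint P ∧ P ∘L P = P

/-- A set of operators is weak* closed (equivalently, for linear subspaces, closed in the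
weak operator topology). -/
def IsWeakStarClosed {H K : Type*} [NormedAddCommGroup H] [InnerProductSpace ℂ H]
    [NormedAddCommGroup K] [InnerProductSpace ℂ K] (U : Set (H →L[ℂ] K)) : Prop :=
  IsClosed ((ContinuousLinearMapWOT.ofCLM : (H →L[ℂ] K) → (H →WOT[ℂ] K)) '' U)

set_option linter.unusedSectionVars false

section aux
variable {K : Type*} [NormedAddCommGroup K] [InnerProductSpace ℂ K] [CompleteSpace K]

lemma IsProjection.norm_apply_le {P : K →L[ℂ] K} (hP : IsProjection P) (x : K) :
    ‖P x‖ ≤ ‖x‖ := by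
  have hadj : ContinuousLinearMap.adjoint P = P := isSelfAdjoint_iff'.mp hP.1
  have hPP : P (P x) = P x := congrFun (congrArg DFunLike.coe hP.2) x
  have h1 : ⟪P x, P x⟫_ℂ = ⟪x, P x⟫_ℂ := by
    nth_rewrite 1 [← hadj]
    rw [ContinuousLinearMap.adjoint_inner_left]
    exact congrArg (fun y => ⟪x, y⟫_ℂ) hPP
  have h2 : (‖P x‖ : ℝ) * ‖P x‖ ≤ ‖x‖ * ‖P x‖ := by
    calc ‖P x‖ * ‖P x‖ = ‖⟪P x, P x⟫_ℂ‖ := by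
          rw [inner_self_eq_norm_sq_to_K]; simp [sq]
      _ = ‖⟪x, P x⟫_ℂ‖ := by rw [h1]
      _ ≤ ‖x‖ * ‖P x‖ := norm_inner_le_norm _ _
  rcases eq_or_lt_of_le (norm_nonneg (P x)) with h | h
  · rw [← h]; exact norm_nonneg x
  · exact le_of_mul_le_mul_right h2 h

/-- The orthogonal projection onto a complete submodule, as an endomorphism. -/
noncomputable def projCLM (V : Submodule ℂ K) [CompleteSpace V] : K →L[ℂ] K :=
  V.subtypeL ∘L Submodule.orthogonalProjectionOnto V

lemma projCLM_apply_mem (V : Submodule ℂ K) [CompleteSpace V] (x : K) :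
    projCLM V x ∈ V := (Submodule.orthogonalProjectionOnto V x).2

lemma projCLM_apply_of_mem (V : Submodule ℂ K) [CompleteSpace V] {y : K} (hy : y ∈ V) :
    projCLM V y = y := Submodule.starProjection_eq_self_iff.mpr hy

lemma isProjection_projCLM (V : Submodule ℂ K) [CompleteSpace V] :
    IsProjection (projCLM V) := by
  refine ⟨isSelfAdjoint_starProjection V, ?_⟩
  ext x
  exact projCLM_apply_of_mem V (projCLM_apply_mem V x)

lemma projCLM_comm_of_invariant (V : Submodule ℂ K) [CompleteSpace V] (A : K →L[ℂ] K)
    (hA : ∀ x ∈ V, A x ∈ V)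
    (hA' : ∀ x ∈ V, (ContinuousLinearMap.adjoint A) x ∈ V) :
    A ∘L projCLM V = projCLM V ∘L A := by
  have hadjP : ContinuousLinearMap.adjoint (projCLM V) = projCLM V :=
    isSelfAdjoint_iff'.mp (isProjection_projCLM V).1
  have key : ∀ B : K →L[ℂ] K, (∀ x ∈ V, B x ∈ V) →
      projCLM V ∘L (B ∘L projCLM V) = B ∘L projCLM V := by
    intro B hB
    ext x
    exact projCLM_apply_of_mem V (hB _ (projCLM_apply_mem V x))
  have h1 := key A hA
  have h2 := key (ContinuousLinearMap.adjoint A) hA'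
  have h3 := congrArg ContinuousLinearMap.adjoint h2
  rw [ContinuousLinearMap.adjoint_comp, ContinuousLinearMap.adjoint_comp,
    ContinuousLinearMap.adjoint_adjoint, hadjP] at h3
  calc A ∘L projCLM V = projCLM V ∘L (A ∘L projCLM V) := h1.symm
    _ = (projCLM V ∘L A) ∘L projCLM V := by rw [ContinuousLinearMap.comp_assoc]
    _ = projCLM V ∘L A := h3

/-- The closed subspace generated by the orbit of `ξ` under `𝒜`. -/
def orbitClosure (𝒜 : VonNeumannAlgebra K) (ξ : K) : Submodule ℂ K :=
  (Submodule.span ℂ {y | ∃ A ∈ 𝒜, y = A ξ}).topologicalClosure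

instance (𝒜 : VonNeumannAlgebra K) (ξ : K) : CompleteSpace (orbitClosure 𝒜 ξ) :=
  (Submodule.isClosed_topologicalClosure _).completeSpace_coe

lemma self_mem_orbitClosure (𝒜 : VonNeumannAlgebra K) (ξ : K) : ξ ∈ orbitClosure 𝒜 ξ :=
  Submodule.le_topologicalClosure _
    (Submodule.subset_span ⟨1, one_mem 𝒜, by simp⟩)

lemma orbitClosure_smul (𝒜 : VonNeumannAlgebra K) (ξ : K) {g : K →L[ℂ] K} (hg : g ∈ 𝒜)
    {x : K} (hx : x ∈ orbitClosure 𝒜 ξ) : g x ∈ orbitClosure 𝒜 ξ := by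
  set W := Submodule.span ℂ {y | ∃ A ∈ 𝒜, y = A ξ} with hWdef
  have hW : ∀ y ∈ W, g y ∈ W := by
    intro y hy
    induction hy using Submodule.span_induction with
    | mem y hy =>
      obtain ⟨A, hA, rfl⟩ := hy
      exact Submodule.subset_span ⟨g * A, mul_mem hg hA, by simp [ContinuousLinearMap.mul_apply]⟩
    | zero => simpa using zero_mem W
    | add a b _ _ iha ihb => simpa using add_mem iha ihb
    | smul c a _ iha => simpa using Submodule.smul_mem W c iha
  have hx' : x ∈ closure (W : Set K) := hx
  exact map_mem_closure g.continuous hx' (fun y hy => hW y hy)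

lemma projCLM_orbit_mem_commutant (𝒜 : VonNeumannAlgebra K) (ξ : K) :
    projCLM (orbitClosure 𝒜 ξ) ∈ 𝒜.commutant := by
  rw [VonNeumannAlgebra.mem_commutant_iff]
  intro g hg
  exact projCLM_comm_of_invariant (orbitClosure 𝒜 ξ) g
    (fun x hx => orbitClosure_smul 𝒜 ξ hg hx)
    (fun x hx => by
      rw [← ContinuousLinearMap.star_eq_adjoint]
      exact orbitClosure_smul 𝒜 ξ (star_mem hg) hx)

end aux

section vanish
variable {K₁ K₂ : Type*}
    [NormedAddCommGroup K₁] [InnerProductSpace ℂ K₁] [CompleteSpace K₁]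
    [NormedAddCommGroup K₂] [InnerProductSpace ℂ K₂] [CompleteSpace K₂]

lemma inner_eq_zero_on_orbits (𝒜 : VonNeumannAlgebra K₁) (ℬ : VonNeumannAlgebra K₂)
    (U : Submodule ℂ (K₁ →L[ℂ] K₂))
    (hmod : ∀ B ∈ ℬ, ∀ X ∈ U, ∀ A ∈ 𝒜, B ∘L X ∘L A ∈ U)
    {ξ : K₁} {η : K₂} (hann : ∀ X ∈ U, ⟪X ξ, η⟫_ℂ = 0)
    {X : K₁ →L[ℂ] K₂} (hX : X ∈ U)
    {v : K₁} (hv : v ∈ orbitClosure 𝒜 ξ) {w : K₂} (hw : w ∈ orbitClosure ℬ η) :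
    ⟪X v, w⟫_ℂ = 0 := by
  set Wa := Submodule.span ℂ {y | ∃ A ∈ 𝒜, y = A ξ} with hWa
  set Wb := Submodule.span ℂ {y | ∃ B ∈ ℬ, y = B η} with hWb
  have step1 : ∀ v ∈ Wa, ∀ w ∈ Wb, ⟪X v, w⟫_ℂ = 0 := by
    intro v hv
    induction hv using Submodule.span_induction with
    | mem v hv =>
      obtain ⟨A, hA, rfl⟩ := hv
      intro w hw
      induction hw using Submodule.span_induction with
      | mem w hw =>
        obtain ⟨B, hB, rfl⟩ := hw
        have hBU : (ContinuousLinearMap.adjoint B) ∘L X ∘L A ∈ U := by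
          rw [← ContinuousLinearMap.star_eq_adjoint]
          exact hmod _ (star_mem hB) X hX A hA
        have := hann _ hBU
        rw [← ContinuousLinearMap.adjoint_inner_left B η (X (A ξ))]
        exact this
      | zero => simp
      | add a b _ _ iha ihb => rw [inner_add_right, iha, ihb, add_zero]
      | smul c a _ iha => rw [inner_smul_right, iha, mul_zero]
    | zero => intro w _; simp
    | add a b _ _ iha ihb =>
      intro w hw
      rw [map_add, inner_add_left, iha w hw, ihb w hw, add_zero]
    | smul c a _ iha =>
      intro w hw
      rw [map_smul, inner_smul_left, iha w hw, mul_zero]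
  have step2 : ∀ w ∈ Wb, ∀ v ∈ orbitClosure 𝒜 ξ, ⟪X v, w⟫_ℂ = 0 := by
    intro w hw v hv
    have hv' : v ∈ closure (Wa : Set K₁) := hv
    have hcl : IsClosed {v : K₁ | ⟪X v, w⟫_ℂ = 0} :=
      isClosed_eq ((X.continuous.inner continuous_const)) continuous_const
    exact closure_minimal (fun y hy => step1 y hy w hw) hcl hv'
  have hw' : w ∈ closure (Wb : Set K₂) := hw
  have hcl : IsClosed {w : K₂ | ⟪X v, w⟫_ℂ = 0} :=
    isClosed_eq (continuous_const.inner continuous_id) continuous_const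
  exact closure_minimal (fun y hy => step2 y hy v hv) hcl hw'

end vanish

/-- Lemma 1.3: if `U` is a weak* closed subspace which is a `ℬ`–`𝒜` bimodule over
von Neumann algebras `ℬ, 𝒜`, then `r_U(T)` is the supremum of `‖QTP‖` over projections
`Q ∈ ℬ'`, `P ∈ 𝒜'` with `Q U P = 0`. -/
theorem rU_eq_sSup_norm_compress {K₁ K₂ : Type*}
    [NormedAddCommGroup K₁] [InnerProductSpace ℂ K₁] [CompleteSpace K₁]
    [NormedAddCommGroup K₂] [InnerProductSpace ℂ K₂] [CompleteSpace K₂]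
    (𝒜 : VonNeumannAlgebra K₁) (ℬ : VonNeumannAlgebra K₂)
    (U : Submodule ℂ (K₁ →L[ℂ] K₂))
    (hclosed : IsWeakStarClosed (U : Set (K₁ →L[ℂ] K₂)))
    (hmod : ∀ B ∈ ℬ, ∀ X ∈ U, ∀ A ∈ 𝒜, B ∘L X ∘L A ∈ U)
    (T : K₁ →L[ℂ] K₂) :
    rU (U : Set (K₁ →L[ℂ] K₂)) T =
      sSup {c : ℝ | ∃ Q : K₂ →L[ℂ] K₂, ∃ P : K₁ →L[ℂ] K₁,
        IsProjection Q ∧ Q ∈ ℬ.commutant ∧ IsProjection P ∧ P ∈ 𝒜.commutant ∧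
        (∀ X ∈ U, Q ∘L X ∘L P = 0) ∧ c = ‖Q ∘L T ∘L P‖} := by
  set S₁ : Set ℝ := {c : ℝ | ∃ ξ : K₁, ∃ η : K₂, ‖ξ‖ = 1 ∧ ‖η‖ = 1 ∧
    (∀ X ∈ (U : Set (K₁ →L[ℂ] K₂)), ⟪X ξ, η⟫_ℂ = 0) ∧ c = ‖(⟪T ξ, η⟫_ℂ)‖} with hS₁
  set S₂ : Set ℝ := {c : ℝ | ∃ Q : K₂ →L[ℂ] K₂, ∃ P : K₁ →L[ℂ] K₁,
        IsProjection Q ∧ Q ∈ ℬ.commutant ∧ IsProjection P ∧ P ∈ 𝒜.commutant ∧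
        (∀ X ∈ U, Q ∘L X ∘L P = 0) ∧ c = ‖Q ∘L T ∘L P‖} with hS₂
  have hbdd₁ : BddAbove S₁ := by
    refine ⟨‖T‖, ?_⟩
    rintro c ⟨ξ, η, hξ, hη, -, rfl⟩
    calc ‖⟪T ξ, η⟫_ℂ‖ ≤ ‖T ξ‖ * ‖η‖ := norm_inner_le_norm _ _
      _ ≤ (‖T‖ * ‖ξ‖) * ‖η‖ := by
          gcongr
          exact T.le_opNorm ξ
      _ = ‖T‖ := by rw [hξ, hη]; ring
  have hbdd₂ : BddAbove S₂ := by
    refine ⟨‖T‖, ?_⟩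
    rintro c ⟨Q, P, hQ, -, hP, -, -, rfl⟩
    refine ContinuousLinearMap.opNorm_le_bound _ (norm_nonneg T) fun x => ?_
    calc ‖(Q ∘L T ∘L P) x‖ = ‖Q (T (P x))‖ := rfl
      _ ≤ ‖T (P x)‖ := hQ.norm_apply_le _
      _ ≤ ‖T‖ * ‖P x‖ := T.le_opNorm _
      _ ≤ ‖T‖ * ‖x‖ := by gcongr; exact hP.norm_apply_le x
  have h0₂ : (0 : ℝ) ∈ S₂ := by
    refine ⟨0, 0, ⟨by simp [IsSelfAdjoint], by simp⟩, ?_, ⟨by simp [IsSelfAdjoint], by simp⟩,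
      ?_, fun X _ => by simp, by simp⟩
    · rw [VonNeumannAlgebra.mem_commutant_iff]; intro g _; simp
    · rw [VonNeumannAlgebra.mem_commutant_iff]; intro g _; simp
  have hsSup₁nonneg : 0 ≤ sSup S₁ := by
    apply Real.sSup_nonneg
    rintro c ⟨ξ, η, -, -, -, rfl⟩
    exact norm_nonneg _
  have hsSup₂nonneg : 0 ≤ sSup S₂ := le_csSup hbdd₂ h0₂
  rw [show rU (U : Set (K₁ →L[ℂ] K₂)) T = sSup S₁ from rfl]
  apply le_antisymm
  · -- sSup S₁ ≤ sSup S₂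
    refine Real.sSup_le ?_ hsSup₂nonneg
    rintro c ⟨ξ, η, hξ, hη, hann, rfl⟩
    set P := projCLM (orbitClosure 𝒜 ξ) with hPdef
    set Q := projCLM (orbitClosure ℬ η) with hQdef
    have hadjQ : ContinuousLinearMap.adjoint Q = Q :=
      isSelfAdjoint_iff'.mp (isProjection_projCLM _).1
    have hQXP : ∀ X ∈ U, Q ∘L X ∘L P = 0 := by
      intro X hX
      ext x
      show Q (X (P x)) = 0
      have hperp : X (P x) ∈ (orbitClosure ℬ η)ᗮ := by
        rw [Submodule.mem_orthogonal]
        intro u hu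
        rw [inner_eq_zero_symm]
        exact inner_eq_zero_on_orbits 𝒜 ℬ U hmod hann hX
          (projCLM_apply_mem _ x) hu
      show ((orbitClosure ℬ η).subtypeL ∘L Submodule.orthogonalProjectionOnto (orbitClosure ℬ η)) (X (P x)) = 0
      have := Submodule.orthogonalProjectionOnto_apply_of_mem_orthogonal hperp
      simp [this]
    have hmem : ‖Q ∘L T ∘L P‖ ∈ S₂ :=
      ⟨Q, P, isProjection_projCLM _, projCLM_orbit_mem_commutant ℬ η,
        isProjection_projCLM _, projCLM_orbit_mem_commutant 𝒜 ξ, hQXP, rfl⟩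
    have hPξ : P ξ = ξ := projCLM_apply_of_mem _ (self_mem_orbitClosure 𝒜 ξ)
    have hQη : Q η = η := projCLM_apply_of_mem _ (self_mem_orbitClosure ℬ η)
    have hval : ⟪T ξ, η⟫_ℂ = ⟪(Q ∘L T ∘L P) ξ, η⟫_ℂ := by
      show _ = ⟪Q (T (P ξ)), η⟫_ℂ
      rw [hPξ]
      conv_rhs => rw [← hadjQ, ContinuousLinearMap.adjoint_inner_left, hQη]
    calc ‖⟪T ξ, η⟫_ℂ‖ = ‖⟪(Q ∘L T ∘L P) ξ, η⟫_ℂ‖ := by rw [hval]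
      _ ≤ ‖(Q ∘L T ∘L P) ξ‖ * ‖η‖ := norm_inner_le_norm _ _
      _ ≤ (‖Q ∘L T ∘L P‖ * ‖ξ‖) * ‖η‖ := by gcongr; exact le_opNorm _ _
      _ = ‖Q ∘L T ∘L P‖ := by rw [hξ, hη]; ring
      _ ≤ sSup S₂ := le_csSup hbdd₂ hmem
  · -- sSup S₂ ≤ sSup S₁
    refine Real.sSup_le ?_ hsSup₁nonneg
    rintro c ⟨Q, P, hQ, hQc, hP, hPc, hQXP, rfl⟩
    have hadjQ : ContinuousLinearMap.adjoint Q = Q := isSelfAdjoint_iff'.mp hQ.1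
    have hQQ : ∀ z, Q (Q z) = Q z := fun z => congrFun (congrArg DFunLike.coe hQ.2) z
    have hPP : ∀ z, P (P z) = P z := fun z => congrFun (congrArg DFunLike.coe hP.2) z
    refine le_of_forall_lt fun r hr => ?_
    rcases lt_or_ge r 0 with hr0 | hr0
    · exact hr0.trans_le hsSup₁nonneg
    · obtain ⟨x, hx1, hxr⟩ := (Q ∘L T ∘L P).exists_lt_apply_of_lt_opNorm hr
      set y : K₂ := (Q ∘L T ∘L P) x with hydef
      have hyQ : y = Q (T (P x)) := rfl
      have hb : 0 < ‖y‖ := lt_of_le_of_lt hr0 hxr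
      have hyne : y ≠ 0 := norm_pos_iff.mp hb
      have hPx : P x ≠ 0 := by
        intro h
        apply hyne
        rw [hyQ, h]
        simp
      have ha : 0 < ‖P x‖ := norm_pos_iff.mpr hPx
      have ha1 : ‖P x‖ < 1 := lt_of_le_of_lt (hP.norm_apply_le x) hx1
      set ξ := (‖P x‖⁻¹ : ℂ) • P x with hξdef
      set η := (‖y‖⁻¹ : ℂ) • y with hηdef
      have hξ : ‖ξ‖ = 1 := norm_smul_inv_norm (𝕜 := ℂ) hPx
      have hη : ‖η‖ = 1 := norm_smul_inv_norm (𝕜 := ℂ) hyne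
      have hQy : Q y = y := by rw [hyQ]; exact hQQ _
      -- the annihilation property
      have hannξη : ∀ X ∈ (U : Set (K₁ →L[ℂ] K₂)), ⟪X ξ, η⟫_ℂ = 0 := by
        intro X hX
        have hQX : Q (X (P x)) = 0 := by
          have h := hQXP X hX
          calc Q (X (P x)) = (Q ∘L X ∘L P) x := rfl
            _ = 0 := by rw [h]; rfl
        have h1 : ⟪X (P x), y⟫_ℂ = 0 := by
          rw [← hQy, ← hadjQ, ContinuousLinearMap.adjoint_inner_right, hQX]
          simp
        rw [hξdef, hηdef, map_smul, inner_smul_left, inner_smul_right, h1]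
        simp
      -- the value
      have h2 : ⟪T (P x), y⟫_ℂ = ⟪y, y⟫_ℂ := by
        conv_lhs => rw [← hQy, ← hadjQ, ContinuousLinearMap.adjoint_inner_right]
        rw [← hyQ]
      have hval : ‖⟪T ξ, η⟫_ℂ‖ = ‖P x‖⁻¹ * (‖y‖⁻¹ * (‖y‖ * ‖y‖)) := by
        rw [hξdef, hηdef, map_smul, inner_smul_left, inner_smul_right, h2]
        rw [inner_self_eq_norm_sq_to_K]
        simp [norm_mul, sq, abs_of_nonneg, inv_nonneg.mpr (norm_nonneg _)]
      have hmem : ‖⟪T ξ, η⟫_ℂ‖ ∈ S₁ := ⟨ξ, η, hξ, hη, hannξη, rfl⟩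
      have hgt : r < ‖⟪T ξ, η⟫_ℂ‖ := by
        rw [hval]
        have h3 : ‖y‖⁻¹ * (‖y‖ * ‖y‖) = ‖y‖ := by field_simp
        rw [h3]
        have h4 : (1 : ℝ) ≤ ‖P x‖⁻¹ := (one_le_inv₀ ha).mpr ha1.le
        calc r < ‖y‖ := hxr
          _ = 1 * ‖y‖ := (one_mul _).symm
          _ ≤ ‖P x‖⁻¹ * ‖y‖ := by gcongr
      exact hgt.trans_le (le_csSup hbdd₁ hmem)
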